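/- Let k ≥ 2 and (x_n)_{n≥1} ⊆ [0,1] be any sequence. For all scales s_1,…,s_{k-1} > 0 and every N ≥ 1 one has R_k^*(s_1,…,s_{k-1},N)^{k-1} ≤ R_k^*(s_1,N)·R_k^*(s_2,N)···R_k^*(s_{k-1},N). -/

import Mathlib

open Finset Filter MeasureTheory
open scoped Classical ENNReal NNReal

/-- Distance from `x` to the nearest integer. -/
noncomputable def nint (x : ℝ) : ℝ := |x - round x|

/-- Signed distance from `x` to the origin modulo 1. -/
noncomputable def sdist (x : ℝ) : ℝ :=
  if Int.fract x ≤ 1 / 2 then Int.fract x else Int.fract x - 1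

/-- Number of `k`-tuples of pairwise distinct indices in `{1,…,N}` whose rescaled signed
differences lie in the box `∏ r, [a r, b r]`. -/
noncomputable def corrBoxCount (x : ℕ → ℝ) (k N : ℕ) (a b : Fin (k - 1) → ℝ) : ℕ :=
  ((Fintype.piFinset fun _ : Fin k => Finset.Icc 1 N).filter fun i =>
    Function.Injective i ∧ ∀ r : Fin (k - 1),
      (N : ℝ) * sdist (x (i ⟨0, by have := r.2; omega⟩) - x (i ⟨r.1 + 1, by have := r.2; omega⟩))
        ∈ Set.Icc (a r) (b r)).card

/-- The sequence `x` (indexed by `n ≥ 1`) has Poissonian correlations of order `k`. -/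
def HasPoissonianCorr (x : ℕ → ℝ) (k : ℕ) : Prop :=
  ∀ a b : Fin (k - 1) → ℝ, (∀ r, a r ≤ b r) →
    Tendsto (fun N : ℕ => (corrBoxCount x k N a b : ℝ) / N) atTop
      (nhds (∏ r, (b r - a r)))

/-- The `k`-th order correlation function `R_k(s₁,…,s_{k-1},N)` (pairwise distinct indices). -/
noncomputable def Rcorr (x : ℕ → ℝ) (k N : ℕ) (s : Fin (k - 1) → ℝ) : ℝ :=
  (((Fintype.piFinset fun _ : Fin k => Finset.Icc 1 N).filter fun i =>
    Function.Injective i ∧ ∀ r : Fin (k - 1),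
      nint (x (i ⟨0, by have := r.2; omega⟩) - x (i ⟨r.1 + 1, by have := r.2; omega⟩))
        ≤ s r / N).card : ℝ) / N

/-- The `k`-th order correlation function `R_k^*(s₁,…,s_{k-1},N)` (indices not necessarily
distinct). -/
noncomputable def RcorrStar (x : ℕ → ℝ) (k N : ℕ) (s : Fin (k - 1) → ℝ) : ℝ :=
  (((Fintype.piFinset fun _ : Fin k => Finset.Icc 1 N).filter fun i =>
    ∀ r : Fin (k - 1),
      nint (x (i ⟨0, by have := r.2; omega⟩) - x (i ⟨r.1 + 1, by have := r.2; omega⟩))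
        ≤ s r / N).card : ℝ) / N

lemma RStar_holder_nat {n : ℕ} (hn : n ≠ 0) (T : Finset ℕ) (b : Fin n → ℕ → ℕ) :
    (∑ m ∈ T, ∏ r, b r m) ^ n ≤ ∏ r, ∑ m ∈ T, (b r m) ^ n := by
  set g : Fin n → ℕ → ℝ≥0∞ := fun i m => if m ∈ T then (b i m : ℝ≥0∞) else 0 with hg
  have hinv : (n : ℝ) * (n : ℝ)⁻¹ = 1 := mul_inv_cancel₀ (by exact_mod_cast hn)
  have key := ENNReal.lintegral_prod_norm_pow_le (μ := Measure.count) Finset.univ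
      (f := fun i m => g i m ^ (n : ℕ)) (p := fun _ => (n : ℝ)⁻¹)
      (fun i _ => (measurable_of_countable _).aemeasurable)
      (by simp [Finset.sum_const, hinv])
      (fun i _ => by positivity)
  have hpow : ∀ i m, (g i m ^ (n : ℕ)) ^ ((n : ℝ)⁻¹) = g i m := by
    intro i m
    rw [← ENNReal.rpow_natCast (g i m) n, ← ENNReal.rpow_mul, hinv, ENNReal.rpow_one]
  simp only [hpow, lintegral_count] at key
  -- compute the tsums
  have hL : ∑' m : ℕ, ∏ i : Fin n, g i m = ((∑ m ∈ T, ∏ r, b r m : ℕ) : ℝ≥0∞) := by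
    rw [tsum_eq_sum (s := T) (fun m hm => by
      simp only [hg]
      rw [Finset.prod_eq_zero (Finset.mem_univ (⟨0, Nat.pos_of_ne_zero hn⟩ : Fin n))]
      simp [hm])]
    push_cast
    exact Finset.sum_congr rfl fun m hm => Finset.prod_congr rfl fun i _ => by simp [hg, hm]
  have hR : ∀ i : Fin n, ∑' m : ℕ, g i m ^ (n : ℕ) = ((∑ m ∈ T, (b i m) ^ n : ℕ) : ℝ≥0∞) := by
    intro i
    rw [tsum_eq_sum (s := T) (fun m hm => by simp [hg, hm, hn])]
    push_cast
    exact Finset.sum_congr rfl fun m hm => by simp [hg, hm]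
  rw [hL] at key
  simp only [hR] at key
  have key2 := ENNReal.rpow_le_rpow key (z := (n : ℝ)) (by positivity)
  rw [ENNReal.prod_rpow_of_nonneg (by positivity)] at key2
  simp only [← ENNReal.rpow_mul, inv_mul_cancel₀ (show (n:ℝ) ≠ 0 by exact_mod_cast hn),
    ENNReal.rpow_one] at key2
  rw [ENNReal.rpow_natCast] at key2
  exact_mod_cast key2

lemma RStar_count_factor (x : ℕ → ℝ) (k N : ℕ) (hk : 2 ≤ k) (t : Fin (k - 1) → ℝ) :
    ((Fintype.piFinset fun _ : Fin k => Finset.Icc 1 N).filter fun i =>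
      ∀ r : Fin (k - 1),
        nint (x (i ⟨0, by have := r.2; omega⟩) - x (i ⟨r.1 + 1, by have := r.2; omega⟩))
          ≤ t r / N).card
    = ∑ m ∈ Finset.Icc 1 N, ∏ r : Fin (k - 1),
        ((Finset.Icc 1 N).filter fun j => nint (x m - x j) ≤ t r / N).card := by
  have h0 : 0 < k := by omega
  have hA : ∀ r : Fin (k - 1), r.1 + 1 < k := fun r => by have := r.2; omega
  have hB : ∀ j : Fin k, j.1 - 1 < k - 1 := fun j => by have := j.2; omega
  set T := Finset.Icc 1 N with hT
  set F := (Fintype.piFinset fun _ : Fin k => T).filter fun i =>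
      ∀ r : Fin (k - 1),
        nint (x (i ⟨0, by have := r.2; omega⟩) - x (i ⟨r.1 + 1, by have := r.2; omega⟩))
          ≤ t r / N with hF
  have hfib : F.card = ∑ m ∈ T, (F.filter fun i => i ⟨0, h0⟩ = m).card := by
    refine Finset.card_eq_sum_card_fiberwise fun i hi => ?_
    simp only [hF, Finset.mem_coe, Finset.mem_filter, Fintype.mem_piFinset] at hi
    exact hi.1 _
  rw [hfib]
  refine Finset.sum_congr rfl fun m hm => ?_
  rw [← Fintype.card_piFinset fun r : Fin (k - 1) =>
      T.filter fun j => nint (x m - x j) ≤ t r / N]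
  refine Finset.card_bij' (fun i _ => fun r : Fin (k - 1) => i ⟨r.1 + 1, hA r⟩)
    (fun g _ => fun j : Fin k => if h : j.1 = 0 then m else g ⟨j.1 - 1, hB j⟩) ?_ ?_ ?_ ?_
  · intro i hi
    simp only [hF, Finset.mem_filter, Fintype.mem_piFinset] at hi
    obtain ⟨⟨hmem, hcond⟩, hi0⟩ := hi
    rw [Fintype.mem_piFinset]
    intro r
    rw [Finset.mem_filter]
    refine ⟨hmem _, ?_⟩
    have h := hcond r
    rwa [show (⟨0, h0⟩ : Fin k) = ⟨0, h0⟩ from rfl, hi0] at h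
  · intro g hg
    rw [Fintype.mem_piFinset] at hg
    have hg' : ∀ r, g r ∈ T ∧ nint (x m - x (g r)) ≤ t r / N :=
      fun r => Finset.mem_filter.mp (hg r)
    rw [Finset.mem_filter]
    constructor
    · rw [hF, Finset.mem_filter]
      constructor
      · rw [Fintype.mem_piFinset]
        intro j
        by_cases h : j.1 = 0
        · simpa [h] using hm
        · simpa [h] using (hg' ⟨j.1 - 1, hB j⟩).1
      · intro r
        have h1 : (r.1 + 1 : ℕ) ≠ 0 := Nat.succ_ne_zero r.1
        simp only [dif_pos rfl, dif_neg h1]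
        have he : (⟨r.1 + 1 - 1, hB ⟨r.1 + 1, hA r⟩⟩ : Fin (k - 1)) = r := by
          ext; simp
        rw [he]
        exact (hg' r).2
    · simp
  · intro i hi
    funext j
    by_cases h : j.1 = 0
    · simp only [dif_pos h]
      rw [Finset.mem_filter] at hi
      rw [← hi.2]
      congr 1
      exact Fin.ext h.symm
    · simp only [dif_neg h]
      congr 1
      exact Fin.ext (Nat.succ_pred_eq_of_pos (Nat.pos_of_ne_zero h))
  · intro g hg
    funext r
    have h1 : (r.1 + 1 : ℕ) ≠ 0 := Nat.succ_ne_zero r.1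
    simp only [dif_neg h1]
    congr 1

lemma RStar_cf2 (x : ℕ → ℝ) (k N : ℕ) (hk : 2 ≤ k) (c : ℝ) :
    ((Fintype.piFinset fun _ : Fin k => Finset.Icc 1 N).filter fun i =>
      ∀ r : Fin (k - 1),
        nint (x (i ⟨0, by have := r.2; omega⟩) - x (i ⟨r.1 + 1, by have := r.2; omega⟩))
          ≤ (fun _ : Fin (k - 1) => c) r / N).card
    = ∑ m ∈ Finset.Icc 1 N,
        ((Finset.Icc 1 N).filter fun j => nint (x m - x j) ≤ c / N).card ^ (k - 1) := by
  rw [RStar_count_factor x k N hk (fun _ => c)]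
  exact Finset.sum_congr rfl fun m _ => by
    rw [Finset.prod_const, Finset.card_univ, Fintype.card_fin]

/-- For any sequence in `[0,1]`, any `k ≥ 2`, scales `s₁,…,s_{k-1} > 0` and
`N ≥ 1`, `R_k^*(s₁,…,s_{k-1},N)^{k-1} ≤ R_k^*(s₁,N)·R_k^*(s₂,N)⋯R_k^*(s_{k-1},N)`. -/
theorem RcorrStar_pow_le_prod_RcorrStar
    (k : ℕ) (hk : 2 ≤ k) (x : ℕ → ℝ) (hx : ∀ n, x n ∈ Set.Icc (0 : ℝ) 1)
    (s : Fin (k - 1) → ℝ) (hs : ∀ r, 0 < s r) (N : ℕ) (hN : 1 ≤ N) :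
    RcorrStar x k N s ^ (k - 1) ≤ ∏ r : Fin (k - 1), RcorrStar x k N (fun _ => s r) := by
  have hn : k - 1 ≠ 0 := by omega
  have hNpos : (0:ℝ) < N := by exact_mod_cast hN
  have h1 := RStar_count_factor x k N hk s
  unfold RcorrStar
  rw [h1]
  simp only [RStar_cf2 x k N hk]
  rw [div_pow, Finset.prod_div_distrib, Finset.prod_const, Finset.card_univ, Fintype.card_fin]
  apply div_le_div_of_nonneg_right ?_ (by positivity)
  have := RStar_holder_nat hn (Finset.Icc 1 N)
      (fun r m => ((Finset.Icc 1 N).filter fun j => nint (x m - x j) ≤ s r / N).card)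
  exact_mod_cast this
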